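/- arXiv:1410.1623 — 2 statements merged into one kernel-verified Lean document; each statement's English description precedes it below -/
import Mathlib

section
/- Let s ∈ (0,1), b > 0, K = s/b, and let g ∈ 𝒳_{a,b} have zero average (ĝ_0 ≡ 0). Then the truncated linear difference equation ψ(x+y,y) − ψ(x,y) = y·g^{<K}(x,y) has a unique solution ψ ∈ 𝒳_{a,b} with zero average, given in Fourier coefficients by ψ̂_k(y) = y ĝ_k(y)/(e^{2πiky} − 1) for 0 < |k| < K, and it satisfies ‖ψ‖_{a,b} ≤ ω(s) ‖g‖_{a,b}, where ω(s) = (1/2π) · max_{|z| ≤ 2πs} |z/(e^z − 1)|. -/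
/-- `ω(s) = (1/2π) max_{|z|≤2πs} |z/(e^z−1)|`. -/
noncomputable def smallOmega (s : ℝ) : ℝ :=
  (1 / (2 * Real.pi)) * ⨆ z : {z : ℂ // ‖z‖ ≤ 2 * Real.pi * s}, ‖(z : ℂ) / (Complex.exp z - 1)‖

/-- The Fourier norm `‖g‖_{a,b} = ∑_{k∈ℤ} ‖ĝ_k‖_b e^{2π|k|a}`, expressed in terms of the
Fourier coefficients `ghat`. -/
noncomputable def fourierNorm (a b : ℝ) (ghat : ℤ → ℂ → ℂ) : ℝ :=
  ∑' k : ℤ, (⨆ y : Metric.ball (0 : ℂ) b, ‖ghat k (y : ℂ)‖) * Real.exp (2 * Real.pi * (|k| : ℝ) * a)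

/-- `ψ` (given by its Fourier coefficients `psihat`, vanishing outside the domain) is an
element of `𝒳_{a,b}` with zero average solving the truncated linear equation
`ψ(x+y,y) − ψ(x,y) = y·g^{<K}(x,y)`, expressed on Fourier coefficients as
`ψ̂_k(y)(e^{2πiky} − 1) = y ĝ_k(y)` for `|k| < K` and `= 0` for `|k| ≥ K`. -/
def IsTruncSol (b K : ℝ) (ghat psihat : ℤ → ℂ → ℂ) : Prop :=
  (∀ k, AnalyticOn ℂ (psihat k) (Metric.ball (0 : ℂ) b)) ∧
  (∀ k y, y ∉ Metric.ball (0 : ℂ) b → psihat k y = 0) ∧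
  (∀ y, psihat 0 y = 0) ∧
  (∀ (k : ℤ) (y : ℂ), y ∈ Metric.ball (0 : ℂ) b →
    psihat k y * (Complex.exp (2 * Real.pi * Complex.I * k * y) - 1)
      = y * (if (|k| : ℝ) < K then ghat k y else 0))



section auxSec
open Filter Topology

lemma aux_expNeOne {z : ℂ} (hz : z ≠ 0) (h : ‖z‖ < 2*Real.pi) : Complex.exp z ≠ 1 := by
  intro h1
  rw [Complex.exp_eq_one_iff] at h1
  obtain ⟨n, rfl⟩ := h1
  have hn : n ≠ 0 := by rintro rfl; simp at hz
  have h1 : (1:ℝ) ≤ |(n:ℝ)| := by exact_mod_cast Int.one_le_abs hn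
  have : ‖(n:ℂ) * (2*Real.pi*Complex.I)‖ = |(n:ℝ)| * (2*Real.pi) := by
    simp [norm_mul, abs_of_pos Real.pi_pos]
    
  rw [this] at h
  nlinarith [Real.pi_pos]

lemma aux_tendsto (c : ℂ) (hc : c ≠ 0) :
    Tendsto (fun y : ℂ => y / (Complex.exp (c*y) - 1)) (𝓝[≠] (0:ℂ)) (𝓝 c⁻¹) := by
  have hD : HasDerivAt (fun y : ℂ => Complex.exp (c*y)) c 0 := by
    exact ((hasDerivAt_id (0:ℂ)).const_mul c |>.cexp).congr_deriv (by simp)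
  rw [hasDerivAt_iff_tendsto_slope] at hD
  have h2 := hD.inv₀ hc
  refine h2.congr' ?_
  filter_upwards [self_mem_nhdsWithin] with y hy
  have hy' : y ≠ 0 := hy
  rw [slope_def_field]
  field_simp
  simp

noncomputable def auxC (k : ℤ) : ℂ := 2 * Real.pi * Complex.I * k

example (k : ℤ) (y : ℂ) : auxC k * y = 2 * Real.pi * Complex.I * k * y := rfl

lemma auxC_norm (k : ℤ) : ‖auxC k‖ = 2 * Real.pi * |(k:ℝ)| := by
  simp [auxC, norm_mul, abs_of_pos Real.pi_pos]

lemma auxC_ne {k : ℤ} (hk : k ≠ 0) : auxC k ≠ 0 := by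
  simp [auxC, Real.pi_ne_zero, Complex.I_ne_zero, hk]

lemma aux_z_lt {b s : ℝ} {k : ℤ} {y : ℂ} (hb : 0 < b) (hkK : |(k:ℝ)| < s/b)
    (hy : ‖y‖ < b) : ‖auxC k * y‖ < 2*Real.pi*s := by
  rw [norm_mul, auxC_norm]
  have h1 : |(k:ℝ)| < s/b := hkK
  have h2 : |(k:ℝ)| * ‖y‖ < (s/b)*b := mul_lt_mul'' h1 hy (abs_nonneg _) (norm_nonneg _)
  rw [div_mul_cancel₀ _ hb.ne'] at h2
  nlinarith [Real.pi_pos]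

lemma aux_den_ne {b s : ℝ} {k : ℤ} {y : ℂ} (hb : 0 < b) (hs1 : s < 1) (hk : k ≠ 0)
    (hkK : |(k:ℝ)| < s/b) (hy : ‖y‖ < b) (hy0 : y ≠ 0) :
    Complex.exp (auxC k * y) - 1 ≠ 0 := by
  refine sub_ne_zero.2 (aux_expNeOne (mul_ne_zero (auxC_ne hk) hy0) ?_)
  have := aux_z_lt hb hkK hy
  nlinarith [Real.pi_pos]


noncomputable def auxF (ghat : ℤ → ℂ → ℂ) (k : ℤ) (y : ℂ) : ℂ :=
  if y = 0 then ghat k 0 / auxC k else y * ghat k y / (Complex.exp (auxC k * y) - 1)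

-- continuity at 0 along punctured nhds
lemma auxF_tendsto0 {b : ℝ} (hb : 0 < b) (ghat : ℤ → ℂ → ℂ) (k : ℤ) (hk : k ≠ 0)
    (hganal : AnalyticOnNhd ℂ (ghat k) (Metric.ball (0:ℂ) b)) :
    Tendsto (auxF ghat k) (𝓝[≠] (0:ℂ)) (𝓝 (auxF ghat k 0)) := by
  have h0 : (0:ℂ) ∈ Metric.ball (0:ℂ) b := by simp [hb]
  have hgh : Tendsto (fun y => ghat k y) (𝓝[≠] (0:ℂ)) (𝓝 (ghat k 0)) :=
    ((hganal 0 h0).continuousAt.tendsto).mono_left nhdsWithin_le_nhds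
  have h := hgh.mul (aux_tendsto (auxC k) (auxC_ne hk))
  have he : auxF ghat k 0 = ghat k 0 * (auxC k)⁻¹ := by simp [auxF, div_eq_mul_inv]
  rw [he]
  refine Tendsto.congr' ?_ h
  filter_upwards [self_mem_nhdsWithin] with z hz
  have hz' : z ≠ 0 := hz
  simp only [auxF, if_neg hz']
  ring

lemma auxF_contAt0 {b : ℝ} (hb : 0 < b) (ghat : ℤ → ℂ → ℂ) (k : ℤ) (hk : k ≠ 0)
    (hganal : AnalyticOnNhd ℂ (ghat k) (Metric.ball (0:ℂ) b)) :
    ContinuousAt (auxF ghat k) 0 := by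
  unfold ContinuousAt
  rw [← nhdsNE_sup_pure (0:ℂ), Filter.tendsto_sup]
  exact ⟨auxF_tendsto0 hb ghat k hk hganal, tendsto_pure_nhds _ _⟩

lemma auxF_anal {b s : ℝ} (hb : 0 < b) (hs1 : s < 1) (ghat : ℤ → ℂ → ℂ) (k : ℤ)
    (hk : k ≠ 0) (hkK : |(k:ℝ)| < s/b)
    (hganal : AnalyticOnNhd ℂ (ghat k) (Metric.ball (0:ℂ) b)) :
    AnalyticOnNhd ℂ (auxF ghat k) (Metric.ball (0:ℂ) b) := by
  set U : Set ℂ := Metric.ball (0:ℂ) b \ {0} with hU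
  have hUopen : IsOpen U := Metric.isOpen_ball.sdiff isClosed_singleton
  set G : ℂ → ℂ := fun y => y * ghat k y / (Complex.exp (auxC k * y) - 1) with hG
  have hGanal : AnalyticOnNhd ℂ G U := by
    refine DifferentiableOn.analyticOnNhd ?_ hUopen
    intro z hz
    refine DifferentiableAt.differentiableWithinAt ?_
    refine (differentiableAt_id.mul (hganal z hz.1).differentiableAt).div ?_
      (aux_den_ne hb hs1 hk hkK (mem_ball_zero_iff.1 hz.1) hz.2)
    exact (Complex.differentiable_exp.differentiableAt.comp z
      ((differentiableAt_const _).mul differentiableAt_id)).sub (differentiableAt_const _)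
  have hFG : ∀ z ∈ U, G z = auxF ghat k z := by
    intro z hz
    have hz2 : z ≠ 0 := hz.2
    simp only [auxF, if_neg hz2]
    rfl
  intro y hy
  rcases eq_or_ne y 0 with rfl | hy0
  · apply Complex.analyticAt_of_differentiable_on_punctured_nhds_of_continuousAt
    · have hUmem : U ∈ 𝓝[≠] (0:ℂ) := by
        rw [hU, Set.diff_eq]
        exact Filter.inter_mem (mem_nhdsWithin_of_mem_nhds (Metric.isOpen_ball.mem_nhds hy))
          self_mem_nhdsWithin
      filter_upwards [hUmem] with z hz
      have hd : DifferentiableAt ℂ G z := (hGanal z hz).differentiableAt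
      refine hd.congr_of_eventuallyEq ?_
      filter_upwards [hUopen.mem_nhds hz] with w hw
      exact (hFG w hw).symm
    · exact auxF_contAt0 hb ghat k hk hganal
  · have hyU : y ∈ U := ⟨hy, hy0⟩
    refine (hGanal y hyU).congr ?_
    filter_upwards [hUopen.mem_nhds hyU] with w hw
    exact hFG w hw


open scoped Classical in
noncomputable def auxPsi (b K : ℝ) (ghat : ℤ → ℂ → ℂ) (k : ℤ) (y : ℂ) : ℂ :=
  if (k ≠ 0 ∧ |(k:ℝ)| < K) ∧ y ∈ Metric.ball (0:ℂ) b then auxF ghat k y else 0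

lemma auxPsi_sol {b s : ℝ} (hb : 0 < b) (hs1 : s < 1) (ghat : ℤ → ℂ → ℂ)
    (hganal : ∀ k, AnalyticOn ℂ (ghat k) (Metric.ball (0 : ℂ) b))
    (hg0 : ∀ y, ghat 0 y = 0) :
    IsTruncSol b (s/b) ghat (auxPsi b (s/b) ghat) := by
  classical
  have hganal' : ∀ k, AnalyticOnNhd ℂ (ghat k) (Metric.ball (0:ℂ) b) := fun k =>
    (Metric.isOpen_ball.analyticOn_iff_analyticOnNhd).1 (hganal k)
  refine ⟨?_, ?_, ?_, ?_⟩
  · intro k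
    by_cases hA : k ≠ 0 ∧ |(k:ℝ)| < s/b
    · intro y hy
      refine ((auxF_anal hb hs1 ghat k hA.1 hA.2 (hganal' k) y hy).congr ?_).analyticWithinAt
      filter_upwards [Metric.isOpen_ball.mem_nhds hy] with z hz
      simp only [auxPsi, if_pos (And.intro hA hz)]
    · have hzero : auxPsi b (s/b) ghat k = fun _ => (0:ℂ) :=
        funext fun z => if_neg (fun h => hA h.1)
      rw [hzero]
      exact analyticOn_const
  · intro k y hy
    exact if_neg (fun h => hy h.2)
  · intro y
    exact if_neg (by simp)
  · intro k y hy
    by_cases hk : k = 0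
    · subst hk
      simp [auxPsi, hg0]
    by_cases hkK : |(k:ℝ)| < s/b
    · rcases eq_or_ne y 0 with rfl | hy0
      · simp
      · have hd := aux_den_ne hb hs1 hk hkK (mem_ball_zero_iff.1 hy) hy0
        have h1 : auxPsi b (s/b) ghat k y = y * ghat k y / (Complex.exp (auxC k * y) - 1) := by
          simp [auxPsi, auxF, hy, hy0, hk, hkK]
        rw [h1, if_pos hkK]
        exact div_mul_cancel₀ _ hd
    · have h1 : auxPsi b (s/b) ghat k y = 0 := if_neg (fun h => hkK h.1.2)
      rw [h1, if_neg hkK, zero_mul, mul_zero]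


lemma aux_uniq {b s : ℝ} (hb : 0 < b) (hs1 : s < 1) (ghat : ℤ → ℂ → ℂ)
    (hganal : ∀ k, AnalyticOn ℂ (ghat k) (Metric.ball (0 : ℂ) b))
    (hg0 : ∀ y, ghat 0 y = 0) (ψ : ℤ → ℂ → ℂ)
    (h : IsTruncSol b (s/b) ghat ψ) : ψ = auxPsi b (s/b) ghat := by
  classical
  obtain ⟨hanal, hout, hzero, heq⟩ := h
  obtain ⟨hanal', hout', hzero', heq'⟩ := auxPsi_sol hb hs1 ghat hganal hg0
  have hcont : ∀ (χ : ℤ → ℂ → ℂ), (∀ k, AnalyticOn ℂ (χ k) (Metric.ball (0:ℂ) b)) →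
      ∀ k (y : ℂ), y ∈ Metric.ball (0:ℂ) b → ContinuousAt (χ k) y := by
    intro χ hχ k y hy
    exact (((Metric.isOpen_ball.analyticOn_iff_analyticOnNhd).1 (hχ k)) y hy).continuousAt
  funext k y
  by_cases hy : y ∈ Metric.ball (0:ℂ) b
  swap
  · rw [hout k y hy, hout' k y hy]
  by_cases hk : k = 0
  · subst hk; rw [hzero y, hzero' y]
  by_cases hkK : |(k:ℝ)| < s/b
  · have hagree : ∀ z ∈ Metric.ball (0:ℂ) b, z ≠ 0 →
        ψ k z = auxPsi b (s/b) ghat k z := by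
      intro z hz hz0
      have hd := aux_den_ne hb hs1 hk hkK (mem_ball_zero_iff.1 hz) hz0
      have e1 := heq k z hz
      have e2 := heq' k z hz
      exact mul_right_cancel₀ hd (e1.trans e2.symm)
    rcases eq_or_ne y 0 with rfl | hy0
    · have hfil : 𝓝[Metric.ball (0:ℂ) b \ {0}] (0:ℂ) = 𝓝[≠] (0:ℂ) := by
        rw [Set.diff_eq]
        exact nhdsWithin_inter_of_mem (mem_nhdsWithin_of_mem_nhds (Metric.isOpen_ball.mem_nhds hy))
      have ht1 : Tendsto (ψ k) (𝓝[≠] (0:ℂ)) (𝓝 (ψ k 0)) :=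
        ((hcont ψ hanal k 0 hy).tendsto).mono_left nhdsWithin_le_nhds
      have ht2 : Tendsto (auxPsi b (s/b) ghat k) (𝓝[≠] (0:ℂ))
          (𝓝 (auxPsi b (s/b) ghat k 0)) :=
        ((hcont _ hanal' k 0 hy).tendsto).mono_left nhdsWithin_le_nhds
      have hev : ψ k =ᶠ[𝓝[≠] (0:ℂ)] auxPsi b (s/b) ghat k := by
        rw [← hfil]
        filter_upwards [self_mem_nhdsWithin] with z hz
        exact hagree z hz.1 hz.2
      exact tendsto_nhds_unique (ht1.congr' hev) ht2
    · exact hagree y hy hy0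
  · have hΨ0 : auxPsi b (s/b) ghat k y = 0 := if_neg (fun h => hkK h.1.2)
    rw [hΨ0]
    have hz0 : ∀ z ∈ Metric.ball (0:ℂ) b, Complex.exp (auxC k * z) ≠ 1 → ψ k z = 0 := by
      intro z hz hne
      have e1 := heq k z hz
      rw [if_neg hkK, mul_zero] at e1
      exact (mul_eq_zero.1 e1).resolve_right (sub_ne_zero.2 hne)
    by_cases hdy : Complex.exp (auxC k * y) = 1
    · have hkpos : (0:ℝ) < |(k:ℝ)| := abs_pos.2 (Int.cast_ne_zero.2 hk)
      set r : ℝ := min (b - ‖y‖) (1/|(k:ℝ)|) with hr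
      have hyb := mem_ball_zero_iff.1 hy
      have hrpos : 0 < r := lt_min (by linarith) (by positivity)
      have hev : ∀ᶠ z in 𝓝[≠] y, z ∈ Metric.ball (0:ℂ) b ∧
          Complex.exp (auxC k * z) ≠ 1 := by
        filter_upwards [mem_nhdsWithin_of_mem_nhds (Metric.ball_mem_nhds y hrpos),
          self_mem_nhdsWithin] with z hzr hzy
        have hzy' : z ≠ y := hzy
        have hdist : ‖z - y‖ < r := by rwa [Metric.mem_ball, dist_eq_norm] at hzr
        refine ⟨?_, ?_⟩
        · rw [mem_ball_zero_iff]
          have h1 : ‖z - y‖ < b - ‖y‖ := lt_of_lt_of_le hdist (min_le_left _ _)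
          calc ‖z‖ = ‖(z - y) + y‖ := by ring_nf
          _ ≤ ‖z - y‖ + ‖y‖ := norm_add_le _ _
          _ < b := by linarith
        · intro hexp
          have hone : Complex.exp (auxC k * (z - y)) = 1 := by
            rw [mul_sub, Complex.exp_sub, hexp, hdy, div_one]
          rw [Complex.exp_eq_one_iff] at hone
          obtain ⟨n, hn⟩ := hone
          have hkzy : (k:ℂ) * (z - y) = n := by
            have h2 : (2*(Real.pi:ℂ)*Complex.I) * ((k:ℂ)*(z-y))
                = (2*(Real.pi:ℂ)*Complex.I) * n := by
              rw [show (2*(Real.pi:ℂ)*Complex.I) * ((k:ℂ)*(z-y)) = auxC k * (z - y) by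
                rw [auxC]; ring, hn]; ring
            refine mul_left_cancel₀ ?_ h2
            simp [Real.pi_ne_zero, Complex.I_ne_zero]
          have hn0 : n ≠ 0 := by
            rintro rfl
            rcases (by simpa using hkzy : k = 0 ∨ z - y = 0) with h | h
            · exact hk h
            · exact hzy' (sub_eq_zero.1 h)
          have h1 : (1:ℝ) ≤ |(n:ℝ)| := by exact_mod_cast Int.one_le_abs hn0
          have h2 : ‖(k:ℂ)*(z-y)‖ = |(k:ℝ)| * ‖z-y‖ := by
            rw [norm_mul]; simp
          have h3 : ‖z - y‖ < 1/|(k:ℝ)| := lt_of_lt_of_le hdist (min_le_right _ _)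
          have h4 : |(k:ℝ)| * ‖z-y‖ < 1 := by
            rw [lt_div_iff₀ hkpos] at h3; linarith [h3]
          rw [hkzy] at h2
          simp only [Complex.norm_intCast] at h2
          nlinarith
      have ht1 : Tendsto (ψ k) (𝓝[≠] y) (𝓝 (ψ k y)) :=
        ((hcont ψ hanal k y hy).tendsto).mono_left nhdsWithin_le_nhds
      have ht2 : Tendsto (ψ k) (𝓝[≠] y) (𝓝 0) := by
        refine Tendsto.congr' ?_ tendsto_const_nhds
        filter_upwards [hev] with z hz using (hz0 z hz.1 hz.2).symm
      exact tendsto_nhds_unique ht1 ht2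
    · exact hz0 y hy hdy



lemma aux_tendsto_one :
    Tendsto (fun y : ℂ => ‖y / (Complex.exp y - 1)‖) (𝓝[≠] (0:ℂ)) (𝓝 1) := by
  have h := (aux_tendsto 1 one_ne_zero).norm
  simp only [one_mul, inv_one, norm_one] at h
  exact h

lemma auxM_bdd {s : ℝ} (hs0 : 0 < s) (hs1 : s < 1) :
    BddAbove (Set.range fun z : {z : ℂ // ‖z‖ ≤ 2 * Real.pi * s} =>
      ‖(z : ℂ) / (Complex.exp z - 1)‖) := by
  classical
  have hπ := Real.pi_pos
  set H : ℂ → ℂ := fun z => if z = 0 then 1 else z / (Complex.exp z - 1) with hH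
  have hcont : ContinuousOn H (Metric.closedBall (0:ℂ) (2*Real.pi*s)) := by
    intro z hz
    rcases eq_or_ne z 0 with rfl | hz0
    · refine ContinuousAt.continuousWithinAt ?_
      unfold ContinuousAt
      rw [← nhdsNE_sup_pure (0:ℂ), Filter.tendsto_sup]
      constructor
      · have h1 : Tendsto (fun y : ℂ => y / (Complex.exp y - 1)) (𝓝[≠] (0:ℂ)) (𝓝 1) := by
          simpa using aux_tendsto 1 one_ne_zero
        have hval : H 0 = 1 := by simp [hH]
        rw [hval]
        refine Tendsto.congr' ?_ h1
        filter_upwards [self_mem_nhdsWithin] with w hw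
        simp [hH, if_neg (show w ≠ 0 from hw)]
      · exact tendsto_pure_nhds _ _
    · refine ContinuousAt.continuousWithinAt ?_
      have hne : Complex.exp z - 1 ≠ 0 := by
        refine sub_ne_zero.2 (aux_expNeOne hz0 ?_)
        have := Metric.mem_closedBall.1 hz
        rw [dist_zero_right] at this
        nlinarith
      have hca : ContinuousAt (fun w : ℂ => w / (Complex.exp w - 1)) z :=
        continuousAt_id.div (Complex.continuous_exp.continuousAt.sub continuousAt_const) hne
      refine hca.congr ?_
      filter_upwards [isOpen_compl_singleton.mem_nhds hz0] with w hw
      simp [hH, if_neg (show w ≠ 0 from hw)]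
  obtain ⟨C, hC⟩ := (isCompact_closedBall (0:ℂ) (2*Real.pi*s)).exists_bound_of_continuousOn hcont
  have h0mem : (0:ℂ) ∈ Metric.closedBall (0:ℂ) (2*Real.pi*s) := by
    simp [Metric.mem_closedBall]; positivity
  have hC0 : (0:ℝ) ≤ C := le_trans (by simp [hH]) (hC 0 h0mem)
  refine ⟨C, ?_⟩
  rintro x ⟨⟨z, hz⟩, rfl⟩
  rcases eq_or_ne z 0 with rfl | hz0
  · simpa [Complex.exp_zero] using hC0
  · show ‖z / (Complex.exp z - 1)‖ ≤ C
    have hHz : H z = z / (Complex.exp z - 1) := if_neg hz0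
    rw [← hHz]
    exact hC z (by simpa [Metric.mem_closedBall, dist_zero_right] using hz)

lemma auxM_one {s : ℝ} (hs0 : 0 < s) (hs1 : s < 1) :
    1 ≤ ⨆ z : {z : ℂ // ‖z‖ ≤ 2 * Real.pi * s}, ‖(z : ℂ) / (Complex.exp z - 1)‖ := by
  have hπ := Real.pi_pos
  refine le_of_tendsto aux_tendsto_one ?_
  have hmem : Metric.closedBall (0:ℂ) (2*Real.pi*s) ∈ 𝓝 (0:ℂ) :=
    Metric.closedBall_mem_nhds 0 (by positivity)
  filter_upwards [mem_nhdsWithin_of_mem_nhds hmem] with y hy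
  have hy' : ‖y‖ ≤ 2*Real.pi*s := by
    simpa [Metric.mem_closedBall, dist_zero_right] using hy
  exact le_ciSup (auxM_bdd hs0 hs1) (⟨y, hy'⟩ : {z : ℂ // ‖z‖ ≤ 2 * Real.pi * s})

lemma auxM_nonneg {s : ℝ} (hs0 : 0 < s) (hs1 : s < 1) :
    (0:ℝ) ≤ ⨆ z : {z : ℂ // ‖z‖ ≤ 2 * Real.pi * s}, ‖(z : ℂ) / (Complex.exp z - 1)‖ :=
  le_trans zero_le_one (auxM_one hs0 hs1)


lemma aux_bound {a b s : ℝ} (hb : 0 < b) (hs0 : 0 < s) (hs1 : s < 1)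
    (ghat : ℤ → ℂ → ℂ)
    (hganal : ∀ k, AnalyticOn ℂ (ghat k) (Metric.ball (0 : ℂ) b))
    (hg0 : ∀ y, ghat 0 y = 0)
    (hgsum : Summable fun k : ℤ =>
      (⨆ y : Metric.ball (0 : ℂ) b, ‖ghat k (y : ℂ)‖) * Real.exp (2 * Real.pi * (|k| : ℝ) * a)) :
    fourierNorm a b (auxPsi b (s/b) ghat) ≤ smallOmega s * fourierNorm a b ghat := by
  classical
  have hπ := Real.pi_pos
  haveI hne : Nonempty (Metric.ball (0:ℂ) b) := ⟨⟨0, by simp [Metric.mem_ball, hb]⟩⟩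
  set M := ⨆ z : {z : ℂ // ‖z‖ ≤ 2 * Real.pi * s}, ‖(z : ℂ) / (Complex.exp z - 1)‖ with hM
  have hM1 : 1 ≤ M := auxM_one hs0 hs1
  have hM0 : 0 ≤ M := le_trans zero_le_one hM1
  have hω : smallOmega s = 1/(2*Real.pi) * M := rfl
  have hω0 : 0 ≤ smallOmega s := by rw [hω]; positivity
  obtain ⟨hanal', hout', hzero', heq'⟩ := auxPsi_sol hb hs1 ghat hganal hg0
  set Ψ : ℤ → ℂ → ℂ := auxPsi b (s/b) ghat with hΨ
  set Sg : ℤ → ℝ := fun k => ⨆ y : Metric.ball (0:ℂ) b, ‖ghat k (y:ℂ)‖ with hSgdef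
  set Sp : ℤ → ℝ := fun k => ⨆ y : Metric.ball (0:ℂ) b, ‖Ψ k (y:ℂ)‖ with hSpdef
  have hSg0 : ∀ k, 0 ≤ Sg k := fun k => Real.iSup_nonneg fun _ => norm_nonneg _
  have hSp0 : ∀ k, 0 ≤ Sp k := fun k => Real.iSup_nonneg fun _ => norm_nonneg _
  have claim : ∀ k, Sp k ≤ smallOmega s * Sg k := by
    intro k
    by_cases hA : k ≠ 0 ∧ |(k:ℝ)| < s/b
    case neg =>
      have hz : ∀ y : Metric.ball (0:ℂ) b, ‖Ψ k (y:ℂ)‖ = 0 := by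
        intro y
        rw [hΨ, show auxPsi b (s/b) ghat k ↑y = 0 from if_neg (fun h => hA h.1)]
        simp
      have hsp : Sp k = 0 := by rw [hSpdef]; simp only [hz]; exact ciSup_const
      rw [hsp]; exact mul_nonneg hω0 (hSg0 k)
    case pos =>
      obtain ⟨hk, hkK⟩ := hA
      have hk1 : (1:ℝ) ≤ |(k:ℝ)| := by exact_mod_cast Int.one_le_abs hk
      by_cases hbdd : BddAbove (Set.range fun y : Metric.ball (0:ℂ) b => ‖ghat k (y:ℂ)‖)
      · have hptw' : ∀ y : ℂ, y ∈ Metric.ball (0:ℂ) b → y ≠ 0 →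
            ‖Ψ k y‖ ≤ smallOmega s * Sg k := by
          intro y hy hy0
          have hyb := mem_ball_zero_iff.1 hy
          have hd := aux_den_ne hb hs1 hk hkK hyb hy0
          have hdn : (0:ℝ) < ‖Complex.exp (auxC k * y) - 1‖ := norm_pos_iff.2 hd
          have h1 : Ψ k y = y * ghat k y / (Complex.exp (auxC k * y) - 1) := by
            simp [hΨ, auxPsi, auxF, hy, hy0, hk, hkK]
          have hgy : ‖ghat k y‖ ≤ Sg k := le_ciSup hbdd (⟨y, hy⟩ : Metric.ball (0:ℂ) b)
          have ht : ‖(auxC k * y)/(Complex.exp (auxC k * y) - 1)‖ ≤ M :=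
            le_ciSup (auxM_bdd hs0 hs1)
              (⟨auxC k * y, (aux_z_lt hb hkK hyb).le⟩ : {z : ℂ // ‖z‖ ≤ 2 * Real.pi * s})
          rw [norm_div, norm_mul, auxC_norm] at ht
          have hΨn : ‖Ψ k y‖ = ‖y‖ * ‖ghat k y‖ / ‖Complex.exp (auxC k * y) - 1‖ := by
            rw [h1, norm_div, norm_mul]
          rw [div_le_iff₀ hdn] at ht
          have hy0' : (0:ℝ) ≤ ‖y‖ := norm_nonneg _
          have hgy0 : (0:ℝ) ≤ ‖ghat k y‖ := norm_nonneg _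
          have key : 2*Real.pi*(‖y‖*‖ghat k y‖)
              ≤ M * Sg k * ‖Complex.exp (auxC k * y) - 1‖ := by
            nlinarith [mul_le_mul_of_nonneg_left hgy (by positivity : (0:ℝ) ≤ 2*Real.pi*‖y‖),
              mul_le_mul_of_nonneg_right ht (hSg0 k),
              mul_le_mul_of_nonneg_right (mul_le_mul_of_nonneg_right hk1 hy0')
                (mul_nonneg (mul_nonneg (by norm_num : (0:ℝ) ≤ 2) hπ.le) (hSg0 k))]
          have h2π : (0:ℝ) < 2*Real.pi := by positivity
          rw [hΨn, hω, div_le_iff₀ hdn]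
          calc ‖y‖*‖ghat k y‖ = (2*Real.pi*(‖y‖*‖ghat k y‖))/(2*Real.pi) := by field_simp
          _ ≤ (M * Sg k * ‖Complex.exp (auxC k * y) - 1‖)/(2*Real.pi) :=
              (div_le_div_iff_of_pos_right h2π).2 key
          _ = 1/(2*Real.pi)*M*(Sg k)*‖Complex.exp (auxC k * y) - 1‖ := by ring
        have hptw : ∀ y : ℂ, y ∈ Metric.ball (0:ℂ) b → ‖Ψ k y‖ ≤ smallOmega s * Sg k := by
          intro y hy
          rcases eq_or_ne y 0 with rfl | hy0
          · have hcont0 : ContinuousAt (Ψ k) 0 :=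
              (((Metric.isOpen_ball.analyticOn_iff_analyticOnNhd).1 (hanal' k)) 0 hy).continuousAt
            have hten : Tendsto (fun z => ‖Ψ k z‖) (𝓝[≠] (0:ℂ)) (𝓝 ‖Ψ k 0‖) :=
              (hcont0.tendsto.norm).mono_left nhdsWithin_le_nhds
            refine le_of_tendsto hten ?_
            have hfil : 𝓝[Metric.ball (0:ℂ) b \ {0}] (0:ℂ) = 𝓝[≠] (0:ℂ) := by
              rw [Set.diff_eq]
              exact nhdsWithin_inter_of_mem
                (mem_nhdsWithin_of_mem_nhds (Metric.isOpen_ball.mem_nhds hy))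
            rw [← hfil]
            filter_upwards [self_mem_nhdsWithin] with z hz
            exact hptw' z hz.1 hz.2
          · exact hptw' y hy hy0
        exact ciSup_le fun y => hptw ↑y y.2
      · have hSgz : Sg k = 0 := Real.iSup_of_not_bddAbove hbdd
        have hnb : ¬ BddAbove (Set.range fun y : Metric.ball (0:ℂ) b => ‖Ψ k (y:ℂ)‖) := by
          rintro ⟨B, hB⟩
          rw [mem_upperBounds] at hB
          apply hbdd
          have hB' : ∀ y : Metric.ball (0:ℂ) b, ‖Ψ k (y:ℂ)‖ ≤ B := fun y =>
            hB _ ⟨y, rfl⟩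
          have hsub : Metric.closedBall (0:ℂ) (b/2) ⊆ Metric.ball (0:ℂ) b := by
            intro z hz
            rw [Metric.mem_closedBall] at hz
            rw [Metric.mem_ball]
            linarith
          obtain ⟨C₁, hC₁⟩ := (isCompact_closedBall (0:ℂ) (b/2)).exists_bound_of_continuousOn
            (((hganal k).continuousOn).mono hsub)
          set E : ℝ := Real.exp (2*Real.pi*s) + 1 with hE
          have hEpos : 0 < E := by positivity
          have hEb : ∀ y : ℂ, ‖y‖ < b → ‖Complex.exp (auxC k * y) - 1‖ ≤ E := by
            intro y hyb
            calc ‖Complex.exp (auxC k * y) - 1‖ ≤ ‖Complex.exp (auxC k * y)‖ + 1 := by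
                  simpa using norm_sub_le (Complex.exp (auxC k * y)) 1
            _ ≤ E := by
                rw [hE]
                have h1 : ‖Complex.exp (auxC k * y)‖ = Real.exp (auxC k * y).re := by
                  rw [Complex.norm_exp]
                have h2 : (auxC k * y).re ≤ ‖auxC k * y‖ := by
                  exact Complex.re_le_norm _
                have h3 : ‖auxC k * y‖ ≤ 2*Real.pi*s := (aux_z_lt hb hkK hyb).le
                have := Real.exp_le_exp.2 (le_trans h2 h3)
                rw [h1]
                linarith
          refine ⟨max C₁ (B * E / (b/2)), ?_⟩
          rintro x ⟨⟨y, hy⟩, rfl⟩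
          by_cases hy2 : ‖y‖ ≤ b/2
          · refine le_trans (hC₁ y ?_) (le_max_left _ _)
            rw [Metric.mem_closedBall, dist_zero_right]
            exact hy2
          · push_neg at hy2
            have hy0 : y ≠ 0 := by
              intro h; rw [h] at hy2; simp at hy2; linarith
            have hyb := mem_ball_zero_iff.1 hy
            have hd := aux_den_ne hb hs1 hk hkK hyb hy0
            have hdn : (0:ℝ) < ‖Complex.exp (auxC k * y) - 1‖ := norm_pos_iff.2 hd
            have h1 : Ψ k y = y * ghat k y / (Complex.exp (auxC k * y) - 1) := by
              simp [hΨ, auxPsi, auxF, hy, hy0, hk, hkK]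
            have hBy := hB' ⟨y, hy⟩
            rw [h1, norm_div, norm_mul] at hBy
            rw [div_le_iff₀ hdn] at hBy
            refine le_trans ?_ (le_max_right _ _)
            rw [le_div_iff₀ (by linarith : (0:ℝ) < b/2)]
            have hEy := hEb y hyb
            have hyp : (0:ℝ) < ‖y‖ := by linarith
            have hgy0 : (0:ℝ) ≤ ‖ghat k y‖ := norm_nonneg _
            have hB0 : (0:ℝ) ≤ B := le_trans (norm_nonneg _) (hB' ⟨y, hy⟩)
            nlinarith
        have hSpz : Sp k = 0 := Real.iSup_of_not_bddAbove hnb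
        rw [hSpz, hSgz, mul_zero]
  have claim2 : ∀ k, Sp k * Real.exp (2 * Real.pi * (|k| : ℝ) * a)
      ≤ smallOmega s * (Sg k * Real.exp (2 * Real.pi * (|k| : ℝ) * a)) := by
    intro k
    rw [← mul_assoc]
    exact mul_le_mul_of_nonneg_right (claim k) (Real.exp_pos _).le
  have h1 : Summable (fun k => smallOmega s * (Sg k * Real.exp (2 * Real.pi * (|k| : ℝ) * a))) :=
    hgsum.mul_left _
  have h2 : Summable (fun k => Sp k * Real.exp (2 * Real.pi * (|k| : ℝ) * a)) :=
    Summable.of_nonneg_of_le (fun k => mul_nonneg (hSp0 k) (Real.exp_pos _).le) claim2 h1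
  calc fourierNorm a b Ψ = ∑' k, Sp k * Real.exp (2 * Real.pi * (|k| : ℝ) * a) := rfl
    _ ≤ ∑' k, smallOmega s * (Sg k * Real.exp (2 * Real.pi * (|k| : ℝ) * a)) :=
        Summable.tsum_le_tsum claim2 h2 h1
    _ = smallOmega s * ∑' k, Sg k * Real.exp (2 * Real.pi * (|k| : ℝ) * a) := tsum_mul_left
    _ = smallOmega s * fourierNorm a b ghat := rfl


end auxSec

/-- Let `s ∈ (0,1)`, `K = s/b`, and let `g ∈ 𝒳_{a,b}` have zero average. Then the truncated
linear equation `ψ(x+y,y) − ψ(x,y) = y·g^{<K}(x,y)` has a unique solution `ψ ∈ 𝒳_{a,b}` with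
zero average; its Fourier coefficients are `ψ̂_k(y) = y ĝ_k(y)/(e^{2πiky} − 1)` for
`0 < |k| < K`, and it satisfies `‖ψ‖_{a,b} ≤ ω(s) ‖g‖_{a,b}`. -/
theorem stmt4 (a b s : ℝ) (ha : 0 < a) (hb : 0 < b) (hs : s ∈ Set.Ioo (0:ℝ) 1)
    (ghat : ℤ → ℂ → ℂ)
    (hganal : ∀ k, AnalyticOn ℂ (ghat k) (Metric.ball (0 : ℂ) b))
    (hg0 : ∀ y, ghat 0 y = 0)
    (hgsum : Summable fun k : ℤ =>
      (⨆ y : Metric.ball (0 : ℂ) b, ‖ghat k (y : ℂ)‖) * Real.exp (2 * Real.pi * (|k| : ℝ) * a)) :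
    (∃! psihat : ℤ → ℂ → ℂ, IsTruncSol b (s / b) ghat psihat) ∧
    ∀ psihat : ℤ → ℂ → ℂ, IsTruncSol b (s / b) ghat psihat →
      (∀ (k : ℤ) (y : ℂ), k ≠ 0 → (|k| : ℝ) < s / b → y ∈ Metric.ball (0 : ℂ) b → y ≠ 0 →
        psihat k y = y * ghat k y / (Complex.exp (2 * Real.pi * Complex.I * k * y) - 1)) ∧
      fourierNorm a b psihat ≤ smallOmega s * fourierNorm a b ghat := by
  obtain ⟨hs0, hs1⟩ := hs
  have hsol := auxPsi_sol hb hs1 ghat hganal hg0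
  have huniq : ∀ ψ, IsTruncSol b (s/b) ghat ψ → ψ = auxPsi b (s/b) ghat :=
    fun ψ h => aux_uniq hb hs1 ghat hganal hg0 ψ h
  constructor
  · exact ⟨auxPsi b (s/b) ghat, hsol, huniq⟩
  · intro ψ hψ
    have hψe : ψ = auxPsi b (s/b) ghat := huniq ψ hψ
    subst hψe
    constructor
    · intro k y hk hkK hy hy0
      simp [auxPsi, auxF, auxC, hy, hy0, hk, hkK]
    · exact aux_bound hb hs0 hs1 ghat hganal hg0 hgsum
end

section
/- Let f: 𝕋 × (−b,b) → 𝕋 × ℝ be a continuous map of the form f(x,y) = (x + y + O(y^{l+1}), y + y^{l+1} c + O(y^{l+2})) for some constant c and integer l ≥ 1, and suppose f has the intersection property: the image of every homotopically nontrivial closed loop in the cylinder intersects the loop. Then c = 0. -/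
/-- Let `f : 𝕋 × (−b,b) → 𝕋 × ℝ` (given by a lift to `ℝ × ℝ`) be a continuous map of the form
`f(x,y) = (x + y + O(y^{l+1}), y + c y^{l+1} + O(y^{l+2}))`, and suppose `f` has the
intersection property: the image of every homotopically nontrivial closed loop in the cylinder
(parametrized as `γ : ℝ → ℝ × ℝ` with `γ(t+1) = γ(t) + (1,0)` and `|γ(t).2| < b`) intersects
the loop (modulo the deck transformation `(x,y) ↦ (x+n,y)`). Then `c = 0`. -/
theorem stmt12 (b c C δ : ℝ) (l : ℕ) (hl : 1 ≤ l) (hb : 0 < b) (hδ : 0 < δ) (hδb : δ ≤ b)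
    (f : ℝ × ℝ → ℝ × ℝ) (hcont : Continuous f)
    (hlift : ∀ x y : ℝ, f (x + 1, y) = ((f (x, y)).1 + 1, (f (x, y)).2))
    (hf1 : ∀ x y : ℝ, |y| ≤ δ → |(f (x, y)).1 - (x + y)| ≤ C * |y| ^ (l + 1))
    (hf2 : ∀ x y : ℝ, |y| ≤ δ → |(f (x, y)).2 - (y + c * y ^ (l + 1))| ≤ C * |y| ^ (l + 2))
    (hint : ∀ γ : ℝ → ℝ × ℝ, Continuous γ →
      (∀ t, γ (t + 1) = ((γ t).1 + 1, (γ t).2)) → (∀ t, |(γ t).2| < b) →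
      ∃ (t t' : ℝ) (n : ℤ), f (γ t) = ((γ t').1 + n, (γ t').2)) :
    c = 0 := by
  -- Key estimate: for every small positive y, |c| ≤ C * y.
  have key : ∀ y : ℝ, 0 < y → y ≤ δ → y < b → |c| ≤ C * y := by
    intro y hy hyδ hyb
    obtain ⟨t, t', n, hft⟩ := hint (fun t => (t, y)) (by continuity)
      (fun t => rfl) (fun t => by simp [abs_of_pos hy]; linarith)
    have h2 : (f (t, y)).2 = y := by
      have := congrArg Prod.snd hft
      simpa using this
    have habs : |y| ≤ δ := by rwa [abs_of_pos hy]
    have := hf2 t y habs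
    rw [h2, abs_of_pos hy] at this
    have hlhs : |y - (y + c * y ^ (l + 1))| = |c| * y ^ (l + 1) := by
      have : y - (y + c * y ^ (l + 1)) = -(c * y ^ (l + 1)) := by ring
      rw [this, abs_neg, abs_mul, abs_of_pos (pow_pos hy _)]
    rw [hlhs] at this
    have hyp : (0:ℝ) < y ^ (l + 1) := pow_pos hy _
    have hpow : y ^ (l + 2) = y * y ^ (l + 1) := by ring
    rw [hpow] at this
    calc |c| = |c| * y ^ (l + 1) / y ^ (l + 1) := by field_simp
      _ ≤ C * (y * y ^ (l + 1)) / y ^ (l + 1) := by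
          gcongr
      _ = C * y := by field_simp
  -- Now conclude c = 0.
  by_contra hc
  have hc' : 0 < |c| := abs_pos.mpr hc
  set ε := min δ (b / 2) with hε
  have hε0 : 0 < ε := lt_min hδ (by linarith)
  have h1 : |c| ≤ C * ε := key ε hε0 (min_le_left _ _)
    (lt_of_le_of_lt (min_le_right _ _) (by linarith))
  have hC : 0 < C := by
    by_contra hC
    push_neg at hC
    nlinarith
  set y := min ε (|c| / (2 * C)) with hy
  have hy0 : 0 < y := lt_min hε0 (by positivity)
  have h2 : |c| ≤ C * y := key y hy0 (le_trans (min_le_left _ _) (min_le_left _ _))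
    (lt_of_le_of_lt (le_trans (min_le_left _ _) (min_le_right _ _)) (by linarith))
  have : C * y ≤ C * (|c| / (2 * C)) :=
    mul_le_mul_of_nonneg_left (min_le_right _ _) hC.le
  have : C * (|c| / (2 * C)) = |c| / 2 := by field_simp
  nlinarith [min_le_right ε (|c| / (2 * C))]
end
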